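/- Tropical infinite dual Nullstellensatz for univariate tropical polynomials: let f_1, …, f_s be univariate tropical polynomials with exponent sets S_j ⊆ ℕ and coefficients c_j : S_j → ℝ. Then there exists x ∈ ℝ that is a tropical zero of every f_j if and only if the infinite Cayley matrix C has a tropical zero, i.e. if and only if there exists a family of reals (y_k)_{k ∈ ℤ} such that for every i ∈ ℤ and every j ∈ {1, …, s} the minimum min_{l ∈ S_j} (c_j(l) + y_{l+i}) is attained for at least two distinct l ∈ S_j. -/

import Mathlib

/-- A univariate tropical polynomial is given by a finite nonempty set `S ⊆ ℕ` of
exponents and coefficients `c : S → ℝ`; `x` is a tropical zero if the minimum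
`min_{l ∈ S} (c l + l·x)` is attained for at least two distinct `l ∈ S`. -/
def IsTropicalZero (S : Finset ℕ) (c : ℕ → ℝ) (x : ℝ) : Prop :=
  ∃ l₁ ∈ S, ∃ l₂ ∈ S, l₁ ≠ l₂ ∧
    (∀ l ∈ S, c l₁ + (l₁ : ℝ) * x ≤ c l + (l : ℝ) * x) ∧
    c l₁ + (l₁ : ℝ) * x = c l₂ + (l₂ : ℝ) * x

/-- A tropical zero of the infinite Cayley matrix `C`: a family of reals
`(y_k)_{k ∈ ℤ}` such that for every row `(i, j)`, `i ∈ ℤ`, the minimum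
`min_{l ∈ S j} (c j l + y (l + i))` is attained for at least two distinct `l ∈ S j`. -/
def IsInfiniteCayleyZero (s : ℕ) (S : Fin s → Finset ℕ) (c : Fin s → ℕ → ℝ)
    (y : ℤ → ℝ) : Prop :=
  ∀ i : ℤ, ∀ j : Fin s,
    ∃ l₁ ∈ S j, ∃ l₂ ∈ S j, l₁ ≠ l₂ ∧
      (∀ l ∈ S j, c j l₁ + y ((l₁ : ℤ) + i) ≤ c j l + y ((l : ℤ) + i)) ∧
      c j l₁ + y ((l₁ : ℤ) + i) = c j l₂ + y ((l₂ : ℤ) + i)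

def RowCond (S : Finset ℕ) (c : ℕ → ℝ) (y : ℤ → ℝ) (i : ℤ) : Prop :=
  ∃ l₁ ∈ S, ∃ l₂ ∈ S, l₁ ≠ l₂ ∧
    (∀ l ∈ S, c l₁ + y ((l₁ : ℤ) + i) ≤ c l + y ((l : ℤ) + i)) ∧
    c l₁ + y ((l₁ : ℤ) + i) = c l₂ + y ((l₂ : ℤ) + i)

lemma rowCond_tie_ne {S : Finset ℕ} {c : ℕ → ℝ} {y : ℤ → ℝ} {i : ℤ} (t : ℕ)
    (h : RowCond S c y i) :
    ∃ l' ∈ S, l' ≠ t ∧ ∀ l ∈ S, c l' + y ((l' : ℤ) + i) ≤ c l + y ((l : ℤ) + i) := by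
  obtain ⟨l₁, h₁, l₂, h₂, hne, hmin, heq⟩ := h
  by_cases ht : l₁ = t
  · refine ⟨l₂, h₂, by rw [← ht]; exact hne.symm, ?_⟩
    intro l hl
    calc c l₂ + y ((l₂ : ℤ) + i) = c l₁ + y ((l₁ : ℤ) + i) := heq.symm
      _ ≤ c l + y ((l : ℤ) + i) := hmin l hl

  · exact ⟨l₁, h₁, ht, hmin⟩

lemma exists_linear_lower (S : Finset ℕ) (c : ℕ → ℝ) (y : ℤ → ℝ)
    (hRC : ∀ i, RowCond S c y i) :
    ∃ x B : ℝ, ∀ k : ℕ, x * (k : ℝ) + B ≤ y (k : ℤ) := by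
  have hne : S.Nonempty := by
    obtain ⟨l₁, h₁, -⟩ := hRC 0; exact ⟨l₁, h₁⟩
  set d := S.max' hne with hd
  obtain ⟨l₁, h₁, l₂, h₂, hne12, -, -⟩ := hRC 0
  have hl₁d : l₁ ≤ d := S.le_max' _ h₁
  have hl₂d : l₂ ≤ d := S.le_max' _ h₂
  have hd1 : 1 ≤ d := by omega
  have hED : (S.erase d).Nonempty := by
    by_cases h : l₁ = d
    · exact ⟨l₂, Finset.mem_erase.mpr ⟨by omega, h₂⟩⟩
    · exact ⟨l₁, Finset.mem_erase.mpr ⟨h, h₁⟩⟩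
  set xm := ((S.erase d).image fun l => (c l - c d) / ((d : ℝ) - (l : ℝ))).min' (hED.image _) with hxm
  have Pm : ∀ l ∈ S, c d + (d : ℝ) * xm ≤ c l + (l : ℝ) * xm := by
    intro l hl
    rcases eq_or_ne l d with rfl | hld
    · exact le_refl _
    have hlt : l < d := lt_of_le_of_ne (S.le_max' _ hl) hld
    have hpos : (0:ℝ) < (d : ℝ) - (l : ℝ) := by
      have : (l : ℝ) < (d : ℝ) := by exact_mod_cast hlt
      linarith
    have hmin := Finset.min'_le _ _
      (Finset.mem_image_of_mem (fun l => (c l - c d) / ((d : ℝ) - (l : ℝ)))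
        (Finset.mem_erase.mpr ⟨hld, hl⟩))
    rw [← hxm, le_div_iff₀ hpos] at hmin
    nlinarith [hmin]
  -- descent step
  have hstep : ∀ q : ℤ, ∃ p : ℤ, q - (d : ℤ) ≤ p ∧ p ≤ q - 1 ∧
      y p - xm * (p : ℝ) ≤ y q - xm * (q : ℝ) := by
    intro q
    obtain ⟨l', hl', hl'd, hmin⟩ := rowCond_tie_ne d (hRC (q - (d : ℤ)))
    have hl'le : l' ≤ d := S.le_max' _ hl'
    have hl'lt : l' < d := lt_of_le_of_ne hl'le hl'd
    refine ⟨(l' : ℤ) + (q - (d : ℤ)), by omega, by omega, ?_⟩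
    have h1 := hmin d (S.max'_mem hne)
    have hq : (d : ℤ) + (q - (d : ℤ)) = q := by ring
    rw [hq] at h1
    have h2 := Pm l' hl'
    have hc : xm * (((l' : ℤ) + (q - (d : ℤ)) : ℤ) : ℝ) =
        xm * (l' : ℝ) + xm * (q : ℝ) - xm * (d : ℝ) := by push_cast; ring
    rw [hc]
    nlinarith [h1, h2]
  set Bm := ((Finset.Icc (-(d : ℤ)) (-1)).image fun p => y p - xm * (p : ℝ)).min'
    (by
      refine Finset.Nonempty.image ?_ _
      refine ⟨-1, Finset.mem_Icc.mpr ⟨by omega, le_refl _⟩⟩) with hBm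
  have hBmle : ∀ p : ℤ, -(d : ℤ) ≤ p → p ≤ -1 → Bm ≤ y p - xm * (p : ℝ) := by
    intro p hp1 hp2
    exact Finset.min'_le _ _ (Finset.mem_image_of_mem _ (Finset.mem_Icc.mpr ⟨hp1, hp2⟩))
  have main : ∀ k : ℕ, Bm ≤ y (k : ℤ) - xm * ((k : ℤ) : ℝ) := by
    intro k
    induction k using Nat.strong_induction_on with
    | _ k IH =>
      obtain ⟨p, hp1, hp2, hp3⟩ := hstep (k : ℤ)
      rcases lt_or_ge p 0 with hneg | hpos
      · exact le_trans (hBmle p (by omega) (by omega)) hp3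
      · have hpk : (p.toNat : ℤ) = p := Int.toNat_of_nonneg hpos
        have hlt : p.toNat < k := by omega
        have := IH p.toNat hlt
        rw [hpk] at this
        exact le_trans this hp3
  refine ⟨xm, Bm, fun k => ?_⟩
  have := main k
  push_cast at this ⊢
  linarith
lemma exists_linear_upper_seq (S : Finset ℕ) (c : ℕ → ℝ) (y : ℤ → ℝ)
    (hRC : ∀ i, RowCond S c y i) :
    ∃ x B : ℝ, ∀ N : ℤ, ∃ q : ℤ, N ≤ q ∧ y q ≤ x * (q : ℝ) + B := by
  have hne : S.Nonempty := by
    obtain ⟨l₁, h₁, -⟩ := hRC 0; exact ⟨l₁, h₁⟩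
  set m := S.min' hne with hm
  obtain ⟨l₁, h₁, l₂, h₂, hne12, -, -⟩ := hRC 0
  have hl₁m : m ≤ l₁ := S.min'_le _ h₁
  have hl₂m : m ≤ l₂ := S.min'_le _ h₂
  set d := S.max' hne with hd
  have hl₁d : l₁ ≤ d := S.le_max' _ h₁
  have hl₂d : l₂ ≤ d := S.le_max' _ h₂
  have hEM : (S.erase m).Nonempty := by
    by_cases h : l₁ = m
    · exact ⟨l₂, Finset.mem_erase.mpr ⟨by omega, h₂⟩⟩
    · exact ⟨l₁, Finset.mem_erase.mpr ⟨h, h₁⟩⟩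
  set xp := ((S.erase m).image fun l => (c m - c l) / ((l : ℝ) - (m : ℝ))).max' (hEM.image _) with hxp
  have Pp : ∀ l ∈ S, c m + (m : ℝ) * xp ≤ c l + (l : ℝ) * xp := by
    intro l hl
    rcases eq_or_ne l m with rfl | hlm
    · exact le_refl _
    have hlt : m < l := lt_of_le_of_ne (S.min'_le _ hl) (Ne.symm hlm)
    have hpos : (0:ℝ) < (l : ℝ) - (m : ℝ) := by
      have : (m : ℝ) < (l : ℝ) := by exact_mod_cast hlt
      linarith
    have hmax := Finset.le_max' _ _
      (Finset.mem_image_of_mem (fun l => (c m - c l) / ((l : ℝ) - (m : ℝ)))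
        (Finset.mem_erase.mpr ⟨hlm, hl⟩))
    rw [← hxp, div_le_iff₀ hpos] at hmax
    nlinarith [hmax]
  have hstep : ∀ p : ℤ, ∃ q : ℤ, p + 1 ≤ q ∧ q ≤ p + (d : ℤ) ∧
      y q - xp * (q : ℝ) ≤ y p - xp * (p : ℝ) := by
    intro p
    obtain ⟨l', hl', hl'm, hmin⟩ := rowCond_tie_ne m (hRC (p - (m : ℤ)))
    have hl'ge : m ≤ l' := S.min'_le _ hl'
    have hl'gt : m < l' := lt_of_le_of_ne hl'ge (Ne.symm hl'm)
    have hl'le : l' ≤ d := S.le_max' _ hl'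
    have hmd : (m : ℤ) ≤ d := by exact_mod_cast S.min'_le _ (S.max'_mem hne)
    refine ⟨(l' : ℤ) + (p - (m : ℤ)), by omega, by omega, ?_⟩
    have h1 := hmin m (S.min'_mem hne)
    have hq : (m : ℤ) + (p - (m : ℤ)) = p := by ring
    rw [hq] at h1
    have h2 := Pp l' hl'
    have hc : xp * (((l' : ℤ) + (p - (m : ℤ)) : ℤ) : ℝ) =
        xp * (l' : ℝ) + xp * (p : ℝ) - xp * (m : ℝ) := by push_cast; ring
    rw [hc]
    nlinarith [h1, h2]
  have chain : ∀ n : ℕ, ∃ q : ℤ, (n : ℤ) ≤ q ∧ y q - xp * (q : ℝ) ≤ y 0 - xp * ((0 : ℤ) : ℝ) := by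
    intro n
    induction n with
    | zero => exact ⟨0, le_refl _, le_refl _⟩
    | succ n IH =>
      obtain ⟨q, hq1, hq2⟩ := IH
      obtain ⟨q', hq'1, -, hq'3⟩ := hstep q
      exact ⟨q', by omega, le_trans hq'3 hq2⟩
  refine ⟨xp, y 0, fun N => ?_⟩
  obtain ⟨q, hq1, hq2⟩ := chain N.toNat
  refine ⟨q, le_trans (Int.self_le_toNat N) hq1, ?_⟩
  simp only [Int.cast_zero, mul_zero] at hq2
  linarith
lemma isTropicalZero_of_rows (S : Finset ℕ) (c : ℕ → ℝ) (y : ℤ → ℝ)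
    (hRC : ∀ i, RowCond S c y i) (α : ℝ)
    (Pa : ∀ ε : ℝ, 0 < ε → ∃ K : ℤ, ∀ k : ℤ, K ≤ k → (α - ε) * (k : ℝ) ≤ y k)
    (Pb : ∀ ε : ℝ, 0 < ε → ∀ N : ℤ, ∃ k : ℤ, N ≤ k ∧ y k < (α + ε) * (k : ℝ)) :
    IsTropicalZero S c α := by
  classical
  by_contra hnot
  have hne : S.Nonempty := by
    obtain ⟨l₁, h₁, -⟩ := hRC 0; exact ⟨l₁, h₁⟩
  set D := S.max' hne with hD
  obtain ⟨ls, hls, hlsmin⟩ := S.exists_min_image (fun l => c l + (l : ℝ) * α) hne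
  have hstrict : ∀ l ∈ S, l ≠ ls → c ls + (ls : ℝ) * α < c l + (l : ℝ) * α := by
    intro l hl hlne
    rcases lt_or_ge (c ls + (ls : ℝ) * α) (c l + (l : ℝ) * α) with h | h
    · exact h
    exfalso
    exact hnot ⟨ls, hls, l, hl, Ne.symm hlne, hlsmin,
      le_antisymm (hlsmin l hl) h⟩
  obtain ⟨l₁, h₁, l₂, h₂, hne12, -, -⟩ := hRC 0
  have hES : (S.erase ls).Nonempty := by
    by_cases h : l₁ = ls
    · exact ⟨l₂, Finset.mem_erase.mpr ⟨by omega, h₂⟩⟩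
    · exact ⟨l₁, Finset.mem_erase.mpr ⟨h, h₁⟩⟩
  set ρ := ((S.erase ls).image
      fun l => (c l + (l : ℝ) * α - (c ls + (ls : ℝ) * α)) / |(l : ℝ) - (ls : ℝ)|).min'
      (hES.image _) with hρ
  have habs : ∀ l : ℕ, l ≠ ls → (0:ℝ) < |(l : ℝ) - (ls : ℝ)| := by
    intro l hlne
    have : (l : ℝ) ≠ (ls : ℝ) := by exact_mod_cast hlne
    exact abs_pos.mpr (sub_ne_zero.mpr this)
  have hρpos : 0 < ρ := by
    have hmem := Finset.min'_mem ((S.erase ls).image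
      (fun l => (c l + (l : ℝ) * α - (c ls + (ls : ℝ) * α)) / |(l : ℝ) - (ls : ℝ)|))
      (hES.image _)
    obtain ⟨l, hl, hval⟩ := Finset.mem_image.mp hmem
    rw [← hρ] at hval
    rw [← hval]
    have hl' := Finset.mem_erase.mp hl
    exact div_pos (by linarith [hstrict l hl'.2 hl'.1]) (habs l hl'.1)
  have hKI : ∀ l ∈ S, l ≠ ls →
      c ls + (ls : ℝ) * α + ρ * |(l : ℝ) - (ls : ℝ)| ≤ c l + (l : ℝ) * α := by
    intro l hl hlne
    have hmin := Finset.min'_le _ _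
      (Finset.mem_image_of_mem
        (fun l => (c l + (l : ℝ) * α - (c ls + (ls : ℝ) * α)) / |(l : ℝ) - (ls : ℝ)|)
        (Finset.mem_erase.mpr ⟨hlne, hl⟩))
    rw [← hρ, le_div_iff₀ (habs l hlne)] at hmin
    linarith
  set g : ℤ → ℝ := fun k => y k - α * (k : ℝ) with hg
  have hstep : ∀ a : ℤ, ∃ b : ℤ, b ≠ a ∧ |b - a| ≤ (D : ℤ) ∧
      g b ≤ g a - ρ * ((|b - a| : ℤ) : ℝ) := by
    intro a
    obtain ⟨l', hl', hl'ne, hmin⟩ := rowCond_tie_ne ls (hRC (a - (ls : ℤ)))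
    have hl'le : (l' : ℤ) ≤ (D : ℤ) := by exact_mod_cast S.le_max' _ hl'
    have hlsle : (ls : ℤ) ≤ (D : ℤ) := by exact_mod_cast S.le_max' _ hls
    have hl'neZ : (l' : ℤ) ≠ (ls : ℤ) := by exact_mod_cast hl'ne
    have h3 : (l' : ℤ) + (a - (ls : ℤ)) - a = (l' : ℤ) - (ls : ℤ) := by ring
    refine ⟨(l' : ℤ) + (a - (ls : ℤ)), by omega, ?_, ?_⟩
    · rw [h3]
      rw [abs_le]
      constructor <;> omega
    have h1 := hmin ls hls
    have hq : (ls : ℤ) + (a - (ls : ℤ)) = a := by ring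
    rw [hq] at h1
    have h2 := hKI l' hl' hl'ne
    have habs2 : ((|(l' : ℤ) + (a - (ls : ℤ)) - a| : ℤ) : ℝ) = |(l' : ℝ) - (ls : ℝ)| := by
      rw [h3]
      push_cast [Int.cast_abs]
      ring_nf
    rw [habs2]
    simp only [hg]
    have hc : α * (((l' : ℤ) + (a - (ls : ℤ)) : ℤ) : ℝ) =
        α * (l' : ℝ) + α * (a : ℝ) - α * (ls : ℝ) := by push_cast; ring
    rw [hc]
    nlinarith [h1, h2]
  -- iteration
  choose F hF1 hF2 hF3 using hstep
  have hFone : ∀ a : ℤ, (1 : ℤ) ≤ |F a - a| := by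
    intro a
    have h1 := hF1 a
    have h2 := abs_pos.mpr (sub_ne_zero.mpr h1)
    omega
  have L1 : ∀ (a₀ : ℤ) (n : ℕ), g (F^[n] a₀) ≤ g a₀ - ρ * (n : ℝ) := by
    intro a₀ n
    induction n with
    | zero => simp
    | succ n IH =>
      rw [Function.iterate_succ_apply']
      set b := F^[n] a₀
      have h1 := hF3 b
      have h2 : (1 : ℝ) ≤ ((|F b - b| : ℤ) : ℝ) := by exact_mod_cast hFone b
      have h3 : ρ * 1 ≤ ρ * ((|F b - b| : ℤ) : ℝ) := by nlinarith
      push_cast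
      nlinarith [IH]
  have L2 : ∀ (a₀ : ℤ) (n : ℕ), g (F^[n] a₀) ≤ g a₀ - ρ * ((|F^[n] a₀ - a₀| : ℤ) : ℝ) := by
    intro a₀ n
    induction n with
    | zero => simp
    | succ n IH =>
      rw [Function.iterate_succ_apply']
      set b := F^[n] a₀
      have h1 := hF3 b
      have htri : |F b - a₀| ≤ |F b - b| + |b - a₀| := abs_sub_le _ _ _
      have htri' : ((|F b - a₀| : ℤ) : ℝ) ≤ ((|F b - b| : ℤ) : ℝ) + ((|b - a₀| : ℤ) : ℝ) := by
        exact_mod_cast htri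
      nlinarith [IH, hρpos.le]
  have L3 : ∀ (a₀ : ℤ) (n : ℕ), |F^[n] a₀ - a₀| ≤ (n : ℤ) * (D : ℤ) := by
    intro a₀ n
    induction n with
    | zero => simp
    | succ n IH =>
      rw [Function.iterate_succ_apply']
      set b := F^[n] a₀
      have h1 := hF2 b
      have htri : |F b - a₀| ≤ |F b - b| + |b - a₀| := abs_sub_le _ _ _
      have hring : (((n : ℕ) + 1 : ℕ) : ℤ) * (D : ℤ) = (n : ℤ) * (D : ℤ) + (D : ℤ) := by
        push_cast; ring
      rw [hring]
      linarith
  -- constants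
  set ε := ρ / (2 * ((D : ℝ) + 1)) with hε
  have hDpos : (0:ℝ) ≤ (D : ℝ) := Nat.cast_nonneg _
  have hεpos : 0 < ε := by positivity
  have hε2 : 2 * ε * ((D : ℝ) + 1) = ρ := by
    rw [hε]
    field_simp
  have hεhalf : ε ≤ ρ / 2 := by nlinarith [mul_nonneg hεpos.le hDpos]
  obtain ⟨K, hK⟩ := Pa ε hεpos
  set K' := max K 0 with hK'
  have hK'0 : 0 ≤ K' := le_max_right _ _
  have hgK : ∀ k : ℤ, K' ≤ k → -(ε * (k : ℝ)) ≤ g k := by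
    intro k hk
    have h1 := hK k (le_trans (le_max_left _ _) hk)
    simp only [hg]
    nlinarith [h1]
  have hIne : (Finset.Icc (-(D : ℤ)) K').Nonempty := ⟨0, Finset.mem_Icc.mpr ⟨by omega, hK'0⟩⟩
  set B₀ := max 0 (((Finset.Icc (-(D : ℤ)) K').image fun p => -(g p)).max' (hIne.image _)) with hB₀
  have hB₀0 : 0 ≤ B₀ := le_max_left _ _
  have hB₀le : ∀ p : ℤ, -(D : ℤ) ≤ p → p ≤ K' → -B₀ ≤ g p := by
    intro p hp1 hp2
    have h1 := Finset.le_max' _ _ (Finset.mem_image_of_mem (fun p => -(g p))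
      (Finset.mem_Icc.mpr ⟨hp1, hp2⟩))
    have h3 : -(g p) ≤ B₀ := le_trans h1 (le_max_right _ _)
    linarith
  set N₀ : ℤ := max (K' + 1) (⌈(2 * B₀) / ρ⌉ + 1) with hN₀
  obtain ⟨a₀, ha₀N, ha₀v⟩ := Pb ε hεpos N₀
  have ha₀K : K' + 1 ≤ a₀ := le_trans (le_max_left _ _) ha₀N
  have ha₀1 : 1 ≤ a₀ := by omega
  have ha₀1R : (1:ℝ) ≤ (a₀ : ℝ) := by exact_mod_cast ha₀1
  have ha₀posR : (0:ℝ) < (a₀ : ℝ) := by linarith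
  have ha₀B : 2 * B₀ < ρ * (a₀ : ℝ) := by
    have h1 : (⌈(2 * B₀) / ρ⌉ + 1 : ℤ) ≤ a₀ := le_trans (le_max_right _ _) ha₀N
    have h2 : ((⌈(2 * B₀) / ρ⌉ : ℤ) : ℝ) ≥ (2 * B₀) / ρ := Int.le_ceil _
    have h3 : ((⌈(2 * B₀) / ρ⌉ + 1 : ℤ) : ℝ) ≤ (a₀ : ℝ) := by exact_mod_cast h1
    push_cast at h3
    have h4 : (2 * B₀) / ρ < (a₀ : ℝ) := by linarith
    rw [div_lt_iff₀ hρpos] at h4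
    linarith
  have ha₀g : g a₀ < ε * (a₀ : ℝ) := by
    simp only [hg]
    nlinarith [ha₀v]
  set n₁ : ℕ := (2 * a₀).toNat + ⌈B₀ / ρ⌉₊ + 1 with hn₁
  have htn : ((2 * a₀).toNat : ℝ) = 2 * (a₀ : ℝ) := by
    have h1 : ((2 * a₀).toNat : ℤ) = 2 * a₀ := Int.toNat_of_nonneg (by omega)
    exact_mod_cast h1
  have hcn : (n₁ : ℝ) = ((2 * a₀).toNat : ℝ) + (⌈B₀ / ρ⌉₊ : ℝ) + 1 := by
    rw [hn₁]
    push_cast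
    ring
  have hn₁a : 2 * (a₀ : ℝ) < (n₁ : ℝ) := by
    rw [hcn, htn]
    have : (0:ℝ) ≤ (⌈B₀ / ρ⌉₊ : ℝ) := Nat.cast_nonneg _
    linarith
  have hn₁b : ε * (a₀ : ℝ) + B₀ < ρ * (n₁ : ℝ) := by
    have h1 : B₀ / ρ ≤ (⌈B₀ / ρ⌉₊ : ℝ) := Nat.le_ceil _
    have h2 : B₀ ≤ ρ * (⌈B₀ / ρ⌉₊ : ℝ) := by
      rw [div_le_iff₀ hρpos] at h1; linarith
    have hεa : ε * (a₀ : ℝ) ≤ ρ / 2 * (a₀ : ℝ) := by nlinarith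
    rw [hcn, htn]
    nlinarith [mul_pos hρpos ha₀posR]
  have hn₁0 : (0:ℝ) ≤ (n₁ : ℝ) := Nat.cast_nonneg _
  clear_value D ρ ε K' B₀ N₀ n₁
  clear hρ hε hD hK' hB₀ hN₀ hn₁ hK hIne hES hKI habs hstrict hlsmin hcn htn ha₀N ha₀v
  by_cases hcross : ∃ n : ℕ, F^[n] a₀ ≤ 0
  · set n₂ := Nat.find hcross with hn₂
    have hspec : F^[n₂] a₀ ≤ 0 := Nat.find_spec hcross
    have hn₂pos : n₂ ≠ 0 := by
      intro h
      rw [h] at hspec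
      simp at hspec
      omega
    have hprev : ¬(F^[n₂ - 1] a₀ ≤ 0) := Nat.find_min hcross (by omega)
    push_neg at hprev
    have hcur : F^[n₂] a₀ = F (F^[n₂ - 1] a₀) := by
      have h : n₂ = (n₂ - 1) + 1 := by omega
      conv_lhs => rw [h]
      rw [Function.iterate_succ_apply']
    set prev := F^[n₂ - 1] a₀ with hprevdef
    set cur := F prev with hcurdef
    have hspec2 : cur ≤ 0 := by rw [← hcur]; exact hspec
    have habsb : -(D : ℤ) ≤ cur - prev ∧ cur - prev ≤ (D : ℤ) := abs_le.mp (hF2 prev)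
    have hL2 := L2 a₀ n₂
    rw [hcur] at hL2
    clear_value cur prev n₂
    clear hcur hprevdef hcurdef hn₂ hspec
    have hcurlb : -(D : ℤ) ≤ cur := by omega
    have hBcur : -B₀ ≤ g cur := hB₀le cur hcurlb (by omega)
    have habs3 : |cur - a₀| = a₀ - cur := by
      rw [abs_sub_comm]
      exact abs_of_nonneg (by omega)
    have habsge : (a₀ : ℝ) ≤ ((|cur - a₀| : ℤ) : ℝ) := by
      have h1 : a₀ ≤ |cur - a₀| := by omega
      exact_mod_cast h1
    have hmul : ρ * (a₀ : ℝ) ≤ ρ * ((|cur - a₀| : ℤ) : ℝ) :=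
      mul_le_mul_of_nonneg_left habsge hρpos.le
    have hεa : ε * (a₀ : ℝ) ≤ ρ / 2 * (a₀ : ℝ) :=
      mul_le_mul_of_nonneg_right hεhalf ha₀posR.le
    linarith [hL2, hBcur, ha₀g, hmul, hεa, ha₀B]
  · push_neg at hcross
    have hposn : ∀ n : ℕ, 1 ≤ F^[n] a₀ := fun n => by have := hcross n; omega
    set v := F^[n₁] a₀ with hv
    have hL1 : g v ≤ g a₀ - ρ * (n₁ : ℝ) := L1 a₀ n₁
    have hvpos : 1 ≤ v := hposn n₁
    have hvub : v ≤ a₀ + (n₁ : ℤ) * (D : ℤ) := by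
      have h1 := L3 a₀ n₁
      have h2 := abs_le.mp h1
      omega
    clear_value v
    clear hv
    by_cases hvK : v ≤ K'
    · have hBv : -B₀ ≤ g v := hB₀le v (by omega) hvK
      linarith [hL1, ha₀g, hn₁b, hBv]
    · push_neg at hvK
      have hgv : -(ε * ((v : ℤ) : ℝ)) ≤ g v := hgK v (by omega)
      have hvubR : ((v : ℤ) : ℝ) ≤ (a₀ : ℝ) + (n₁ : ℝ) * (D : ℝ) := by exact_mod_cast hvub
      have key : ρ * (n₁ : ℝ) = 2 * ε * (D : ℝ) * (n₁ : ℝ) + 2 * ε * (n₁ : ℝ) := by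
        linear_combination (n₁ : ℝ) * hε2.symm
      have h6 : ε * ((v : ℤ) : ℝ) ≤ ε * ((a₀ : ℝ) + (n₁ : ℝ) * (D : ℝ)) :=
        mul_le_mul_of_nonneg_left hvubR hεpos.le
      have e1 : ε * ((a₀ : ℝ) + (n₁ : ℝ) * (D : ℝ))
          = ε * (a₀ : ℝ) + ε * (D : ℝ) * (n₁ : ℝ) := by ring
      have h4 : ε * (2 * (a₀ : ℝ)) < ε * (n₁ : ℝ) := mul_lt_mul_of_pos_left hn₁a hεpos
      have e2 : ε * (2 * (a₀ : ℝ)) = 2 * (ε * (a₀ : ℝ)) := by ring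
      have h5 : (0:ℝ) ≤ ε * (D : ℝ) * (n₁ : ℝ) :=
        mul_nonneg (mul_nonneg hεpos.le hDpos) hn₁0
      have h0 : (0:ℝ) ≤ ε * (a₀ : ℝ) := mul_nonneg hεpos.le (by linarith)
      linarith only [hgv, h6, e1, h4, e2, h5, h0, hL1, ha₀g, key]

theorem tropical_infinite_dual_nullstellensatz
    (s : ℕ) (S : Fin s → Finset ℕ) (hS : ∀ j, (S j).Nonempty)
    (c : Fin s → ℕ → ℝ) :
    (∃ x : ℝ, ∀ j : Fin s, IsTropicalZero (S j) (c j) x) ↔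
      (∃ y : ℤ → ℝ, IsInfiniteCayleyZero s S c y) := by
  constructor
  · rintro ⟨x, hx⟩
    refine ⟨fun k => x * (k : ℝ), ?_⟩
    intro i j
    obtain ⟨l₁, h₁, l₂, h₂, hne, hmin, heq⟩ := hx j
    refine ⟨l₁, h₁, l₂, h₂, hne, ?_, ?_⟩
    · intro l hl
      have h := hmin l hl
      push_cast
      nlinarith [h]
    · push_cast
      linarith [heq]
  · rintro ⟨y, hy⟩
    rcases Nat.eq_zero_or_pos s with hs | hs
    · subst hs
      exact ⟨0, fun j => j.elim0⟩
    have hRC : ∀ j : Fin s, ∀ i : ℤ, RowCond (S j) (c j) y i := fun j i => hy i j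
    set j₀ : Fin s := ⟨0, hs⟩ with hj₀
    obtain ⟨xm, Bm, hlow⟩ := exists_linear_lower (S j₀) (c j₀) y (hRC j₀)
    obtain ⟨xp, Bp, hup⟩ := exists_linear_upper_seq (S j₀) (c j₀) y (hRC j₀)
    set A : Set ℝ := {x : ℝ | ∃ K : ℤ, ∀ k : ℤ, K ≤ k → x * (k : ℝ) ≤ y k} with hA
    have hAne : A.Nonempty := by
      refine ⟨xm - 1, ⟨max 0 ⌈-Bm⌉, ?_⟩⟩
      intro k hk
      have hk0 : 0 ≤ k := le_trans (le_max_left _ _) hk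
      have hkc : (⌈-Bm⌉ : ℤ) ≤ k := le_trans (le_max_right _ _) hk
      have hkR : -Bm ≤ (k : ℝ) := by
        have h1 : (-Bm : ℝ) ≤ (⌈-Bm⌉ : ℤ) := Int.le_ceil _
        have h2 : ((⌈-Bm⌉ : ℤ) : ℝ) ≤ (k : ℝ) := by exact_mod_cast hkc
        linarith
      have hlk := hlow k.toNat
      have hcast : ((k.toNat : ℕ) : ℤ) = k := Int.toNat_of_nonneg hk0
      rw [hcast] at hlk
      have hcast2 : ((k.toNat : ℕ) : ℝ) = ((k : ℤ) : ℝ) := by exact_mod_cast hcast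
      rw [hcast2] at hlk
      nlinarith [hlk]
    have hAbdd : BddAbove A := by
      refine ⟨xp + |Bp|, ?_⟩
      rintro x ⟨K, hx⟩
      by_contra hgt
      push_neg at hgt
      obtain ⟨q, hq1, hq2⟩ := hup (max K 1)
      have hqK : K ≤ q := le_trans (le_max_left _ _) hq1
      have hq1' : (1 : ℤ) ≤ q := le_trans (le_max_right _ _) hq1
      have hq1R : (1:ℝ) ≤ (q : ℝ) := by exact_mod_cast hq1'
      have h1 := hx q hqK
      have h2 : (x - xp) * (q : ℝ) ≤ Bp := by nlinarith
      have h3 : |Bp| < x - xp := by linarith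
      have h4 : (0:ℝ) ≤ |Bp| := abs_nonneg _
      nlinarith [le_abs_self Bp, h2, h3, h4, hq1R]
    set α := sSup A with hα
    have Pa : ∀ ε : ℝ, 0 < ε → ∃ K : ℤ, ∀ k : ℤ, K ≤ k → (α - ε) * (k : ℝ) ≤ y k := by
      intro ε hε
      obtain ⟨x, hxA, hxgt⟩ := Real.add_neg_lt_sSup hAne (show -ε < 0 by linarith)
      obtain ⟨K, hK⟩ := hxA
      refine ⟨max K 0, fun k hk => ?_⟩
      have hk0 : (0:ℤ) ≤ k := le_trans (le_max_right _ _) hk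
      have hkR : (0:ℝ) ≤ (k : ℝ) := by exact_mod_cast hk0
      have h1 := hK k (le_trans (le_max_left _ _) hk)
      have h2 : α - ε ≤ x := by
        rw [hα]
        linarith [hxgt]
      nlinarith [h1, h2]
    have Pb : ∀ ε : ℝ, 0 < ε → ∀ N : ℤ, ∃ k : ℤ, N ≤ k ∧ y k < (α + ε) * (k : ℝ) := by
      intro ε hε N
      have hnotmem : (α + ε) ∉ A := by
        intro hmem
        have := le_csSup hAbdd hmem
        rw [← hα] at this
        linarith
      have hnotmem' : ¬ ∃ K : ℤ, ∀ k : ℤ, K ≤ k → (α + ε) * (k : ℝ) ≤ y k := hnotmem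
      push_neg at hnotmem'
      obtain ⟨k, hk1, hk2⟩ := hnotmem' N
      exact ⟨k, hk1, hk2⟩
    exact ⟨α, fun j => isTropicalZero_of_rows (S j) (c j) y (hRC j) α Pa Pb⟩
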